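/- arXiv:0905.2863 — 5 statements merged into one kernel-verified Lean document; each statement's English description precedes it below -/
import Mathlib

section
/- Let q ≥ 1 and q - 1 ≤ a ≤ q be reals, and let λ⁺, λ⁻ be the roots of X² - (z + 2 + a)X + (z + q + 1) = 0. If |λ⁺| = |λ⁻| and λ⁺ ≠ conj(λ⁻) (i.e. the common modulus ρ ≠ 1 case with λ⁺ = 1 + √(q-a)·ρe^{iα}, λ⁻ = 1 + √(q-a)·ρ^{-1}e^{-iα}, ρ ≠ 1), then |z + q + 1| = 1 - q + a. -/
/-- For `q ≥ 1`, `q-1 ≤ a ≤ q`: if the roots of `X² - (z+2+a)X + (z+q+1) = 0` have equal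
modulus and are not conjugate (the `ρ ≠ 1` case), then `|z+q+1| = 1-q+a`. -/
theorem stmt2 (q a : ℝ) (hq : 1 ≤ q) (ha1 : q - 1 ≤ a) (haq : a ≤ q) (z lp lm : ℂ)
    (hroot : ∀ X : ℂ, X^2 - (z + 2 + (a:ℂ))*X + (z + (q:ℂ) + 1) = (X - lp)*(X - lm))
    (habs : ‖lp‖ = ‖lm‖)
    (hnc : lp ≠ (starRingEnd ℂ) lm) :
    ‖z + (q:ℂ) + 1‖ = 1 - q + a := by
  have h0 := hroot 0
  have h1 := hroot 1
  have hprod : lp * lm = z + (q:ℂ) + 1 := by linear_combination -h0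
  have hs : (lp - 1) * (lm - 1) = ((q - a : ℝ) : ℂ) := by
    push_cast
    linear_combination -h1
  have hn' : lp.re ^ 2 + lp.im ^ 2 = lm.re ^ 2 + lm.im ^ 2 := by
    have h := congrArg (· ^ 2) habs
    simp only [Complex.sq_norm, Complex.normSq_apply] at h
    nlinarith [h]
  rw [← hprod, norm_mul, habs, ← sq, Complex.sq_norm]
  -- goal : normSq lm = 1 - q + a
  have E1 : (lp.re - 1) * (lm.re - 1) - lp.im * lm.im = q - a := by
    have h := congrArg Complex.re hs
    simpa [Complex.mul_re] using h
  have E2 : (lp.re - 1) * lm.im + lp.im * (lm.re - 1) = 0 := by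
    have h := congrArg Complex.im hs
    simpa [Complex.mul_im] using h
  by_cases hlp : lp = 1
  · have hqa : q = a := by
      have h := hs
      rw [hlp] at h
      simp only [sub_self, zero_mul, eq_comm, Complex.ofReal_eq_zero] at h
      linarith
    have hone : Complex.normSq lm = 1 := by
      have h := congrArg (· ^ 2) habs
      simp only [Complex.sq_norm, hlp] at h
      simpa using h.symm
    rw [hone, hqa]; ring
  by_cases hlm : lm = 1
  · have hqa : q = a := by
      have h := hs
      rw [hlm] at h
      simp only [sub_self, mul_zero, eq_comm, Complex.ofReal_eq_zero] at h
      linarith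
    have hone : Complex.normSq lm = 1 := by rw [hlm]; simp
    rw [hone, hqa]; ring
  · -- nondegenerate case
    have hw0 : lp - 1 ≠ 0 := sub_ne_zero.mpr hlp
    have hr2pos : (0:ℝ) < (lp.re - 1) ^ 2 + lp.im ^ 2 := by
      have h := Complex.normSq_pos.mpr hw0
      simp only [Complex.normSq_apply, Complex.sub_re, Complex.sub_im, Complex.one_re,
        Complex.one_im] at h
      nlinarith [h]
    have F1 : ((lp.re - 1) ^ 2 + lp.im ^ 2) * (lm.re - 1) = (q - a) * (lp.re - 1) := by
      linear_combination (lp.re - 1) * E1 + lp.im * E2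
    have F2 : ((lp.re - 1) ^ 2 + lp.im ^ 2) * lm.im = -(q - a) * lp.im := by
      linear_combination (-lp.im) * E1 + (lp.re - 1) * E2
    have key : ((lp.re - 1) ^ 2 + lp.im ^ 2 - (q - a)) *
        ((lp.re - 1) ^ 2 + lp.im ^ 2 + (q - a) + 2 * (lp.re - 1)) = 0 := by
      have hmain : ((lp.re - 1) ^ 2 + lp.im ^ 2) *
          (((lp.re - 1) ^ 2 + lp.im ^ 2 - (q - a)) *
            ((lp.re - 1) ^ 2 + lp.im ^ 2 + (q - a) + 2 * (lp.re - 1))) =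
          ((lp.re - 1) ^ 2 + lp.im ^ 2) * 0 := by
        linear_combination (((lp.re - 1) ^ 2 + lp.im ^ 2) ^ 2) * hn' +
          (((lp.re - 1) ^ 2 + lp.im ^ 2) * (lm.re - 1) + (q - a) * (lp.re - 1) +
            2 * ((lp.re - 1) ^ 2 + lp.im ^ 2)) * F1 +
          (((lp.re - 1) ^ 2 + lp.im ^ 2) * lm.im - (q - a) * lp.im) * F2
      exact mul_left_cancel₀ (ne_of_gt hr2pos) hmain
    rcases mul_eq_zero.mp key with hcase | hcase
    · -- conjugate case: contradiction
      exfalso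
      have hns : Complex.normSq (lp - 1) = q - a := by
        simp only [Complex.normSq_apply, Complex.sub_re, Complex.sub_im, Complex.one_re,
          Complex.one_im]
        nlinarith [hcase]
      have hc : (lp - 1) * (lm - 1) = (lp - 1) * (starRingEnd ℂ (lp - 1)) := by
        rw [Complex.mul_conj, hns]
        exact hs
      have heq : lm - 1 = starRingEnd ℂ (lp - 1) := mul_left_cancel₀ hw0 hc
      have hlmeq : lm = starRingEnd ℂ lp := by
        have h2 : starRingEnd ℂ (lp - 1) = starRingEnd ℂ lp - 1 := by
          simp
        rw [h2] at heq
        linear_combination heq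
      exact hnc (by rw [hlmeq, Complex.conj_conj])
    · -- main case
      simp only [Complex.normSq_apply]
      nlinarith [hcase, hn']
end

section
/- Let q ≥ 1 and a ∈ [0, q] be real, and suppose λ is a root of X² - (z + 2 + a)X + (z + q + 1) = 0 with |λ| = 1, say λ = e^{iα}. Then writing z = c + id, one has c = cos α - 1 - (q+a)/2 and d = sin α·(1 - (q-a)/(2 - 2cos α)) (assuming cos α ≠ 1); consequently d² = -(c+q)²·(2c+q+4+a)/(2c+q+a) whenever 2c + q + a ≠ 0. -/
/-- If `e^{iα}` (with `cos α ≠ 1`) is a root of `X² - (z+2+a)X + (z+q+1) = 0` for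
`z = c + id`, then `c = cos α - 1 - (q+a)/2`, `d = sin α (1 - (q-a)/(2-2cos α))`, and
consequently `d² = -(c+q)²(2c+q+4+a)/(2c+q+a)` whenever `2c+q+a ≠ 0`. -/
theorem stmt10 (q a : ℝ) (hq : 1 ≤ q) (ha0 : 0 ≤ a) (haq : a ≤ q)
    (c d α : ℝ) (hcos : Real.cos α ≠ 1)
    (hroot : Complex.exp ((α:ℂ) * Complex.I)^2
        - (((c:ℂ) + (d:ℂ)*Complex.I) + 2 + (a:ℂ)) * Complex.exp ((α:ℂ) * Complex.I)
        + (((c:ℂ) + (d:ℂ)*Complex.I) + (q:ℂ) + 1) = 0) :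
    c = Real.cos α - 1 - (q + a)/2 ∧
    d = Real.sin α * (1 - (q - a)/(2 - 2*Real.cos α)) ∧
    (2*c + q + a ≠ 0 → d^2 = -(c + q)^2 * (2*c + q + 4 + a)/(2*c + q + a)) := by
  rw [Complex.exp_mul_I, Complex.ext_iff] at hroot
  simp [pow_two, Complex.ext_iff, Complex.add_re, Complex.add_im, Complex.mul_re,
    Complex.mul_im, Complex.cos_ofReal_re, Complex.sin_ofReal_re,
    Complex.cos_ofReal_im, Complex.sin_ofReal_im] at hroot
  obtain ⟨h1, h2⟩ := hroot
  set C := Real.cos α with hC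
  set S := Real.sin α with hS
  have hp : S ^ 2 + C ^ 2 = 1 := Real.sin_sq_add_cos_sq α
  have hCne : (1 : ℝ) - C ≠ 0 := fun h => hcos (by linarith)
  have key : (1 - C) * (2*c + q + a + 2 - 2*C) = 0 := by
    linear_combination (1 - C) * h1 - S * h2 + (C - c - a - 1) * hp
  have hc : c = C - 1 - (q + a)/2 := by
    rcases mul_eq_zero.mp key with h | h
    · exact absurd h hCne
    · linarith
  have h2Cne : (2 : ℝ) - 2*C ≠ 0 := fun h => hcos (by linarith)
  have hdd : d * (2 - 2*C) = S*(2 - 2*C) - S*(q - a) := by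
    linear_combination 2*h2 + 2*S*hc
  have hd : d = S * (1 - (q - a)/(2 - 2*C)) := by
    have hrw : S * (1 - (q - a)/(2 - 2*C)) = (S*(2 - 2*C) - S*(q - a))/(2 - 2*C) := by
      field_simp
    rw [hrw, eq_div_iff h2Cne]
    exact hdd
  refine ⟨hc, hd, fun hne => ?_⟩
  have h2' : d*(1 - C) = S*(-(c + q)) := by linear_combination h2 + 2*S*hc
  have hdsq : (d*(1 - C))^2 = (S*(-(c + q)))^2 := by rw [h2']
  have key2 : (1 - C) * (d^2*(1 - C) - (1 + C)*(c + q)^2) = 0 := by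
    linear_combination hdsq + (c + q)^2 * hp
  have hfin : d^2*(1 - C) = (1 + C)*(c + q)^2 := by
    rcases mul_eq_zero.mp key2 with h | h
    · exact absurd h hCne
    · linarith
  rw [eq_div_iff hne]
  linear_combination -2*hfin + (d^2*2 + (c+q)^2*2)*hc
end

section
/- Let q ≥ 1, 0 ≤ a ≤ q, and let z = c + id with d ≠ 0 and (either c > -a or c < -a-2). If λ⁺, λ⁻ are the roots of X² - (z+2+a)X + (z+q+1) = 0, then |λ⁺| ≠ |λ⁻|. -/
/-- For `q ≥ 1`, `0 ≤ a ≤ q`, `z = c + id` with `d ≠ 0` and `c` outside the strip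
`[-a-2, -a]`, the roots of `X² - (z+2+a)X + (z+q+1) = 0` have distinct moduli. -/
theorem stmt14 (q a : ℝ) (hq : 1 ≤ q) (ha0 : 0 ≤ a) (haq : a ≤ q)
    (c d : ℝ) (hd : d ≠ 0) (hc : -a < c ∨ c < -a - 2) (lp lm : ℂ)
    (hroot : ∀ X : ℂ,
      X^2 - (((c:ℂ) + (d:ℂ)*Complex.I) + 2 + (a:ℂ))*X
        + (((c:ℂ) + (d:ℂ)*Complex.I) + (q:ℂ) + 1) = (X - lp)*(X - lm)) :
    ‖lp‖ ≠ ‖lm‖ := by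
  intro habs
  have h0 := hroot 0
  have h1 := hroot 1
  have hprod : ((c:ℂ) + (d:ℂ)*Complex.I) + q + 1 = lp * lm := by linear_combination h0
  have hsum : ((c:ℂ) + (d:ℂ)*Complex.I) + 2 + a = lp + lm := by linear_combination h0 - h1
  have hlm : lm ≠ 0 := by
    intro h
    have him : (((c:ℂ) + (d:ℂ)*Complex.I) + q + 1).im = 0 := by rw [hprod, h]; simp
    simp [Complex.add_im, Complex.mul_im] at him
    exact hd him
  have hlp : lp ≠ 0 := by
    intro h
    rw [h, norm_zero] at habs
    exact hlm (norm_eq_zero.mp habs.symm)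
  set u : ℂ := lp / lm with hu
  have habsu : ‖u‖ = 1 := by
    rw [hu, norm_div, habs, div_self]
    exact norm_ne_zero_iff.mpr hlm
  have hmul : u * lm = lp := div_mul_cancel₀ lp hlm
  have hconj : (starRingEnd ℂ) u * u = 1 := by
    rw [mul_comm, Complex.mul_conj, Complex.normSq_eq_norm_sq, habsu]
    norm_num
  have hc2 : (starRingEnd ℂ) u * lp = lm := by
    calc (starRingEnd ℂ) u * lp = (starRingEnd ℂ) u * (u * lm) := by rw [hmul]
    _ = ((starRingEnd ℂ) u * u) * lm := by ring
    _ = lm := by rw [hconj]; ring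
  have hkey : (((c:ℂ) + (d:ℂ)*Complex.I) + 2 + a)^2
      = (2 + u + (starRingEnd ℂ) u) * (((c:ℂ) + (d:ℂ)*Complex.I) + q + 1) := by
    rw [hsum, hprod]
    linear_combination (-lp) * hmul + (-lm) * hc2
  have him := congrArg Complex.im hkey
  simp [Complex.add_im, Complex.add_re, Complex.mul_im, Complex.mul_re,
    Complex.conj_im, Complex.conj_re, Complex.I_im, Complex.I_re,
    Complex.ofReal_im, Complex.ofReal_re, pow_two] at him
  -- him should give: 2*(c+a+2)*d = (2 + 2*u.re)*d roughly
  have hre : |u.re| ≤ 1 := by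
    have := Complex.abs_re_le_norm u
    rwa [habsu] at this
  rw [abs_le] at hre
  have heq : c + 2 + a = 1 + u.re := by
    have h2 : (2*(c+2+a) - (2+2*u.re)) * d = 0 := by linear_combination him
    rcases mul_eq_zero.mp h2 with h3 | h3
    · linarith
    · exact absurd h3 hd
  rcases hc with h | h <;> linarith [hre.1, hre.2]
end

section
/- Let q ∈ [1, 2]. For z ∈ ℂ with z on the circle |z + q + 1| = 2 - q, the roots λ⁺, λ⁻ of X² - (z+3)X + (z+q+1) = 0 satisfy |λ⁺| = |λ⁻| or z is real with z ∈ [-1-2√(q-1), -1+2√(q-1)]. -/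
set_option maxHeartbeats 1000000 in
/-- For `q ∈ [1,2]` and `z` on the circle `|z+q+1| = 2-q`, the roots of
`X² - (z+3)X + (z+q+1) = 0` have equal modulus, or `z` is real with
`z ∈ [-1-2√(q-1), -1+2√(q-1)]`. -/
theorem stmt15 (q : ℝ) (hq1 : 1 ≤ q) (hq2 : q ≤ 2) (z lp lm : ℂ)
    (hz : ‖z + (q:ℂ) + 1‖ = 2 - q)
    (hroot : ∀ X : ℂ, X^2 - (z + 3)*X + (z + (q:ℂ) + 1) = (X - lp)*(X - lm)) :
    ‖lp‖ = ‖lm‖ ∨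
      (z.im = 0 ∧ -1 - 2*Real.sqrt (q - 1) ≤ z.re ∧ z.re ≤ -1 + 2*Real.sqrt (q - 1)) := by
  left
  have h0 := hroot 0
  have h1 := hroot 1
  have hp : lp * lm = z + (q:ℂ) + 1 := by linear_combination -h0
  have hs : lp + lm = z + 3 := by linear_combination h1 + hp
  -- circle equation in coordinates
  have hcirc : (z.re + q + 1)^2 + z.im^2 = (2 - q)^2 := by
    have h := congrArg (fun r : ℝ => r^2) hz
    simp only [← Complex.normSq_eq_norm_sq] at h
    simp only [Complex.normSq_apply, Complex.add_re, Complex.add_im, Complex.ofReal_re,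
      Complex.ofReal_im, Complex.one_re, Complex.one_im] at h
    linear_combination h
  -- range of z.re on the circle
  have hre1 : z.re ≤ 1 - 2*q := by nlinarith [sq_nonneg z.im, sq_nonneg (z.re + 2*q - 1)]
  have hre2 : -3 ≤ z.re := by nlinarith [sq_nonneg z.im, sq_nonneg (z.re + 3)]
  set t : ℂ := (lp - lm) * (starRingEnd ℂ) (z + 3) with ht
  have htt : t ^ 2 = (z^2 + 2*z + 5 - 4*(q:ℂ)) * ((starRingEnd ℂ) (z + 3))^2 := by
    have hD2 : (lp - lm)^2 = z^2 + 2*z + 5 - 4*(q:ℂ) := by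
      linear_combination (lp + lm + z + 3) * hs - 4 * hp
    rw [ht, mul_pow, hD2]
  have hre := congrArg Complex.re htt
  have him := congrArg Complex.im htt
  simp only [pow_two, Complex.mul_re, Complex.mul_im, Complex.add_re, Complex.add_im,
    Complex.sub_re, Complex.sub_im, Complex.ofReal_re, Complex.ofReal_im,
    Complex.conj_re, Complex.conj_im, Complex.re_ofNat, Complex.im_ofNat,
    Complex.one_re, Complex.one_im] at hre him
  -- Im (t^2) = 0 on the circle
  have hxy : t.re * t.im = 0 := by
    have : 2 * (t.re * t.im) = 0 := by linear_combination him + 4*z.im*hcirc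
    linarith
  -- Re (t^2) ≤ 0 on the circle
  have hReE : t.re*t.re - t.im*t.im = 4*(q-2)^2*(z.re+1)*(z.re+3) := by
    linear_combination hre + (z.im^2 - (z.re+3)*(z.re+2*q-1)
      + 2*(z.re^2+4*z.re-1+2*q)) * hcirc
  have hre0 : t.re^2 - t.im^2 ≤ 0 := by
    nlinarith [hReE, sq_nonneg (q-2), mul_nonneg (mul_nonneg (sq_nonneg (q-2))
      (by linarith : (0:ℝ) ≤ -(z.re+1))) (by linarith : (0:ℝ) ≤ z.re + 3)]
  have h4 : t.re^4 = 0 := by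
    have hle : t.re^4 ≤ 0 := by nlinarith [hre0, hxy, sq_nonneg t.re]
    have hge : 0 ≤ t.re^4 := by positivity
    linarith
  have htre : t.re = 0 := by
    exact pow_eq_zero_iff (by norm_num : (4:ℕ) ≠ 0) |>.mp h4
  -- t.re = normSq lp - normSq lm
  have hkey : Complex.normSq lp = Complex.normSq lm := by
    have h2 : t = (lp - lm) * (starRingEnd ℂ) (lp + lm) := by rw [ht, hs]
    have h3 : ((lp - lm) * (starRingEnd ℂ) (lp + lm)).re
        = Complex.normSq lp - Complex.normSq lm := by
      simp only [Complex.mul_re, Complex.sub_re, Complex.sub_im, Complex.add_re,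
        Complex.add_im, Complex.conj_re, Complex.conj_im, Complex.normSq_apply]
      ring
    rw [h2, h3] at htre
    linarith
  rw [Complex.norm_def, Complex.norm_def, hkey]
end

section
/- Let q ∈ [1, 5], z = c + id ∈ ℂ, and let λ⁺, λ⁻ be the roots of X² - (z+3)X + (z+q+1) = 0 (the a = 1 case). If some root λ satisfies |λ| = 1 and λ ≠ 1, then c ∈ [-(q+5)/2, -(q+1)/2] and d² = -(c+q)²·(2c+q+5)/(2c+q+1) (provided 2c+q+1 ≠ 0). -/
/-- For `q ∈ [1,5]` and `z = c + id`: if some root `λ ≠ 1` of `X² - (z+3)X + (z+q+1) = 0`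
has modulus `1`, then `c ∈ [-(q+5)/2, -(q+1)/2]` and
`d² = -(c+q)²(2c+q+5)/(2c+q+1)` (provided `2c+q+1 ≠ 0`). -/
theorem stmt19 (q : ℝ) (hq1 : 1 ≤ q) (hq5 : q ≤ 5) (c d : ℝ) (lp lm lam : ℂ)
    (hroot : ∀ X : ℂ,
      X^2 - (((c:ℂ) + (d:ℂ)*Complex.I) + 3)*X
        + (((c:ℂ) + (d:ℂ)*Complex.I) + (q:ℂ) + 1) = (X - lp)*(X - lm))
    (hmem : lam = lp ∨ lam = lm) (habs : ‖lam‖ = 1) (hne : lam ≠ 1) :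
    -(q + 5)/2 ≤ c ∧ c ≤ -(q + 1)/2 ∧
    (2*c + q + 1 ≠ 0 → d^2 = -(c + q)^2*(2*c + q + 5)/(2*c + q + 1)) := by
  have heq : lam^2 - (((c:ℂ) + (d:ℂ)*Complex.I) + 3)*lam
        + (((c:ℂ) + (d:ℂ)*Complex.I) + (q:ℂ) + 1) = 0 := by
    rw [hroot]
    rcases hmem with h | h <;> subst h <;> ring
  set x := lam.re with hxdef
  set y := lam.im with hydef
  have hnorm : x^2 + y^2 = 1 := by
    have h := Complex.sq_norm lam
    rw [habs] at h
    simpa [Complex.normSq_apply, pow_two] using h.symm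
  have hre : x^2 - y^2 - ((c+3)*x - d*y) + (c + q + 1) = 0 := by
    have h := congrArg Complex.re heq
    simp [Complex.mul_re, Complex.mul_im, pow_two] at h ⊢
    linarith [h]
  have him : 2*x*y - ((c+3)*y + d*x) + d = 0 := by
    have h := congrArg Complex.im heq
    simp [Complex.mul_re, Complex.mul_im, pow_two] at h ⊢
    linarith [h]
  have hx1 : x ≠ 1 := by
    intro h
    apply hne
    have hy : y = 0 := by nlinarith [hnorm, h]
    apply Complex.ext <;> simp [← hxdef, ← hydef, h, hy]
  have h1x : 1 - x ≠ 0 := fun h => hx1 (by linarith [sub_eq_zero.mp h])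
  have hx : 2*x = 2*c + q + 3 := by
    have key : (1-x)*(2*c+q+3-2*x) = 0 := by
      linear_combination (1-x)*hre - y*him + (x-c-2)*hnorm
    rcases mul_eq_zero.mp key with h | h
    · exact absurd h h1x
    · linarith
  have hxle : x ≤ 1 := by nlinarith [sq_nonneg y]
  have hxge : -1 ≤ x := by nlinarith [sq_nonneg y]
  refine ⟨by linarith, by linarith, fun hden => ?_⟩
  -- d*(1-x) = -y*(c+q)
  have hd : d*(1-x) = -(y*(c+q)) := by linear_combination him - y*hx
  have hd2 : d^2*(1-x) = (1+x)*(c+q)^2 := by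
    have hsq : (d*(1-x))^2 = (y*(c+q))^2 := by rw [hd]; ring
    have key : (1-x)*(d^2*(1-x) - (1+x)*(c+q)^2) = 0 := by
      linear_combination hsq + (c+q)^2*hnorm
    rcases mul_eq_zero.mp key with h | h
    · exact absurd h h1x
    · linarith
  have hfin : d^2 * (2*c+q+1) = -(c+q)^2*(2*c+q+5) := by
    linear_combination (-2)*hd2 - (d^2+(c+q)^2)*hx
  rw [eq_div_iff hden]
  linear_combination hfin
end
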